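/- Let (X_t) be a Markov chain on a finite state space, let T be the hitting time of some fixed state, and set h(A) := E_A[T] for each state A. If there is a constant κ such that for every allowed transition A → B (i.e., with positive transition probability) one has 0 ≤ h(A) − h(B) ≤ κ, then Var_A(T) ≤ κ · E_A[T] for every initial state A. -/

import Mathlib

open scoped ENNReal BigOperators
open Filter Asymptotics

namespace ARW

variable {V : Type} [Fintype V] [DecidableEq V]

/-- A sub-stochastic matrix: every row sums to at most `1`. -/
def SubStochastic (K : V → V → ℝ≥0∞) : Prop := ∀ x, ∑ y, K x y ≤ 1

/-- Non-degenerate: no principal sub-matrix of `K` is stochastic. -/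
def NonDegenerate (K : V → V → ℝ≥0∞) : Prop :=
  ∀ S : Finset V, S.Nonempty → ∃ x ∈ S, ∑ y ∈ S, K x y ≠ 1

/-- A probability vector on `V`. -/
def IsProbVec (ν : V → ℝ≥0∞) : Prop := ∑ x, ν x = 1

/-- Probability that the `K`-walk currently at `x` next follows the trajectory `xs`
and is then killed. -/
noncomputable def pathProb (K : V → V → ℝ≥0∞) : V → List V → ℝ≥0∞
  | x, [] => 1 - ∑ y, K x y
  | x, y :: ys => K x y * pathProb K y ys

/-- Probability that a `(K,ν)`-walk has the (finite) full trajectory `w`. -/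
noncomputable def walkProb (K : V → V → ℝ≥0∞) (ν : V → ℝ≥0∞) : List V → ℝ≥0∞
  | [] => 0
  | x :: xs => ν x * pathProb K x xs

/-- `p(x)`: the probability that a `(K,ν)`-walk visits `x` before dying. -/
noncomputable def hitProb (K : V → V → ℝ≥0∞) (ν : V → ℝ≥0∞) (x : V) : ℝ≥0∞ :=
  ∑' w : List V, if x ∈ w then walkProb K ν w else 0

/-- The insertion law `ν` is admissible when every site has a chance of being
visited by a `(K,ν)`-walk. -/
def Admissible (K : V → V → ℝ≥0∞) (ν : V → ℝ≥0∞) : Prop := ∀ x, 0 < hitProb K ν x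

/-- The uniform law on `V`. -/
noncomputable def unifLaw (V : Type) [Fintype V] : V → ℝ≥0∞ :=
  fun _ => (Fintype.card V : ℝ≥0∞)⁻¹

/-! ### IDLA -/

/-- The IDLA update: the walker settles at the first site of its trajectory
which is not already occupied. -/
def idlaUpdate (S : Finset V) : List V → Finset V
  | [] => S
  | x :: xs => if x ∈ S then idlaUpdate S xs else insert x S

/-- The IDLA aggregate obtained from the initial set `A` after using the walks `ws`. -/
def idlaSet (A : Finset V) (ws : List (List V)) : Finset V := ws.foldl idlaUpdate A

/-- `P(T^A > t)`: probability that the IDLA process started from `A` and driven by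
i.i.d. `(K,ν)`-walks has not filled `V` after `t` steps. -/
noncomputable def idlaTail (K : V → V → ℝ≥0∞) (ν : V → ℝ≥0∞) (A : Finset V) (t : ℕ) : ℝ≥0∞ :=
  ∑' ws : Fin t → List V,
    (∏ i, walkProb K ν (ws i)) * (if idlaSet A (List.ofFn ws) = Finset.univ then 0 else 1)

/-- `E[T^A]`: the expected filling time of IDLA started from `A`. -/
noncomputable def idlaMean (K : V → V → ℝ≥0∞) (ν : V → ℝ≥0∞) (A : Finset V) : ℝ≥0∞ :=
  ∑' t : ℕ, idlaTail K ν A t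

/-- `Var(T^A)`: the variance of the filling time of IDLA started from `A`. -/
noncomputable def idlaVar (K : V → V → ℝ≥0∞) (ν : V → ℝ≥0∞) (A : Finset V) : ℝ≥0∞ :=
  (∑' t : ℕ, (2 * t + 1) * idlaTail K ν A t) - (idlaMean K ν A) ^ 2

/-! ### The ARW chain -/

/-- The state of a single site: empty, one sleeping particle, or `n+1` active particles. -/
inductive Site : Type
  | empty : Site
  | sleeping : Site
  | active (n : ℕ) : Site
deriving DecidableEq

/-- A configuration of particles. -/
abbrev Conf (V : Type) := V → Site

def Site.isActive : Site → Bool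
  | .active _ => true
  | _ => false

/-- The set of sites holding at least one active particle. -/
def activeSites (η : Conf V) : Finset V := Finset.univ.filter fun x => (η x).isActive

/-- Adding one active particle to a site (waking a sleeping particle if present). -/
def Site.addActive : Site → Site
  | .empty => .active 0
  | .sleeping => .active 1
  | .active n => .active (n + 1)

/-- Removing one active particle from a site. -/
def Site.removeOne : Site → Site
  | .active (n + 1) => .active n
  | _ => .empty

/-- Adding one active particle at site `y`. -/
def addActiveAt (η : Conf V) (y : V) : Conf V := Function.update η y (η y).addActive

/-- One sequential toppling step of ARW stabilization with sleep rate `lam`: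
an active site `x` is selected (if any); if its particle is alone it falls asleep
with probability `lam/(1+lam)`, moves to `y` with probability `K x y/(1+lam)` and
dies with the remaining probability; if it is not alone it moves to `y` with
probability `K x y` and dies with the remaining probability.  Stable
configurations are absorbing. -/
noncomputable def toppleKernel (K : V → V → ℝ≥0∞) (lam : ℝ) (η ξ : Conf V) : ℝ≥0∞ :=
  if h : (activeSites η).Nonempty then
    let x := h.choose
    let ημ : Conf V := Function.update η x (η x).removeOne
    let move : ℝ≥0∞ := ∑ y, if ξ = addActiveAt ημ y then K x y else 0
    let die : ℝ≥0∞ := if ξ = ημ then 1 - ∑ y, K x y else 0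
    if η x = Site.active 0 then
      ((if ξ = Function.update η x Site.sleeping then ENNReal.ofReal lam else 0) + move + die)
        / (ENNReal.ofReal lam + 1)
    else move + die
  else if ξ = η then 1 else 0

/-- Iterates of a sub-probability kernel on configurations. -/
noncomputable def kernelPow (M : Conf V → Conf V → ℝ≥0∞) : ℕ → Conf V → Conf V → ℝ≥0∞
  | 0 => fun η ξ => if ξ = η then 1 else 0
  | t + 1 => fun η ξ => ∑' σ : Conf V, M η σ * kernelPow M t σ ξ

/-- A stable configuration, seen as a configuration (`true` = sleeping particle). -/
def embed (b : V → Bool) : Conf V := fun x => if b x then Site.sleeping else Site.empty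

/-- One step of the `ARW(K,lam,ν)` chain: insert an active particle at a `ν`-distributed
site and stabilize; `arwStep K lam ν η ξ` is the probability of reaching the stable
configuration `ξ` from the stable configuration `η`. -/
noncomputable def arwStep (K : V → V → ℝ≥0∞) (lam : ℝ) (ν : V → ℝ≥0∞)
    (η ξ : V → Bool) : ℝ≥0∞ :=
  ∑ x, ν x * ⨆ t, kernelPow (toppleKernel K lam) t (addActiveAt (embed η) x) (embed ξ)

/-- The transition matrix of the `ARW(K,lam,ν)` chain on stable configurations. -/
noncomputable def arwMatrix (K : V → V → ℝ≥0∞) (lam : ℝ) (ν : V → ℝ≥0∞) :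
    Matrix (V → Bool) (V → Bool) ℝ :=
  Matrix.of fun η ξ => (arwStep K lam ν η ξ).toReal

/-! ### Distances to equilibrium, mixing and relaxation times -/

variable {S : Type} [Fintype S] [DecidableEq S]

/-- `π` is a stationary probability distribution for `P`. -/
def IsStationary (P : Matrix S S ℝ) (π : S → ℝ) : Prop :=
  (∀ s, 0 ≤ π s) ∧ (∑ s, π s = 1) ∧ ∀ s, ∑ r, π r * P r s = π s

/-- The separation distance to equilibrium at time `t`. -/
noncomputable def sepDist (P : Matrix S S ℝ) (π : S → ℝ) (t : ℕ) : ℝ :=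
  ⨆ η, ⨆ ξ, (1 - (P ^ t) η ξ / π ξ)

/-- The separation mixing time with precision `ε`. -/
noncomputable def sepMix (P : Matrix S S ℝ) (π : S → ℝ) (ε : ℝ) : ℕ :=
  sInf {t : ℕ | sepDist P π t ≤ ε}

/-- The total-variation distance to equilibrium at time `t`. -/
noncomputable def tvDist (P : Matrix S S ℝ) (π : S → ℝ) (t : ℕ) : ℝ :=
  ⨆ η, ⨆ A : Finset S, |∑ ξ ∈ A, ((P ^ t) η ξ - π ξ)|

/-- The total-variation mixing time with precision `ε`. -/
noncomputable def tvMix (P : Matrix S S ℝ) (π : S → ℝ) (ε : ℝ) : ℕ :=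
  sInf {t : ℕ | tvDist P π t ≤ ε}

/-- The relaxation time `1/(1-ρ)`, where `ρ` is the largest modulus of the
(complex) eigenvalues of `P` other than `1`. -/
noncomputable def relTime (P : Matrix S S ℝ) : ℝ :=
  (1 - sSup {r : ℝ | ∃ z : ℂ,
      z ≠ 1 ∧ (P.map (fun a : ℝ => (a : ℂ))).charpoly.IsRoot z ∧ r = ‖z‖})⁻¹

/-- Separation (or total-variation) cutoff for a sequence of chains with distance
functions `d n` and mixing times `ts n`. -/
def HasCutoff (d : ℕ → ℕ → ℝ) (ts : ℕ → ℕ) : Prop :=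
  ∀ α : ℝ, 0 ≤ α →
    (α < 1 → Tendsto (fun n => d n ⌊α * (ts n : ℝ)⌋₊) atTop (nhds 1)) ∧
    (1 < α → Tendsto (fun n => d n ⌊α * (ts n : ℝ)⌋₊) atTop (nhds 0))

end ARW
namespace ARW

/-- `P_A(T > t)` where `T` is the hitting time of the target state `z` by the
Markov chain with transition kernel `M` started at `A`. -/
noncomputable def hitTail {S : Type} [Fintype S] [DecidableEq S]
    (M : S → S → ℝ≥0∞) (z : S) : S → ℕ → ℝ≥0∞
  | A, 0 => if A = z then 0 else 1
  | A, t + 1 => if A = z then 0 else ∑ B, M A B * hitTail M z B t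

/-- `E_A[T]`, the expected hitting time of `z` started from `A`. -/
noncomputable def hitMean {S : Type} [Fintype S] [DecidableEq S]
    (M : S → S → ℝ≥0∞) (z : S) (A : S) : ℝ≥0∞ :=
  ∑' t : ℕ, hitTail M z A t

/-- `Var_A(T)`, the variance of the hitting time of `z` started from `A`. -/
noncomputable def hitVar {S : Type} [Fintype S] [DecidableEq S]
    (M : S → S → ℝ≥0∞) (z : S) (A : S) : ℝ≥0∞ :=
  (∑' t : ℕ, (2 * t + 1) * hitTail M z A t) - (hitMean M z A) ^ 2

/-- The law of a sum of `m` independent Bernoulli random variables with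
parameters `p i`, as a measure on `ℝ`. -/
noncomputable def bernoulliSumLaw {m : ℕ} (p : Fin m → ℝ≥0∞) : MeasureTheory.Measure ℝ :=
  ∑ b : Fin m → Bool,
    (∏ i, if b i then p i else 1 - p i) •
      MeasureTheory.Measure.dirac (∑ i, if b i then (1 : ℝ) else 0)

end ARW
namespace ARW

section Aux
variable {S : Type} [Fintype S] [DecidableEq S]

lemma hitTail_self (M : S → S → ℝ≥0∞) (z : S) (t : ℕ) : hitTail M z z t = 0 := by
  cases t <;> simp [hitTail]

lemma hitTail_zero_of_ne (M : S → S → ℝ≥0∞) {z A : S} (h : A ≠ z) :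
    hitTail M z A 0 = 1 := by simp [hitTail, h]

lemma hitTail_succ_of_ne (M : S → S → ℝ≥0∞) {z A : S} (h : A ≠ z) (t : ℕ) :
    hitTail M z A (t + 1) = ∑ B, M A B * hitTail M z B t := by simp [hitTail, h]

lemma one_le_hitMean (M : S → S → ℝ≥0∞) {z A : S} (h : A ≠ z) :
    1 ≤ hitMean M z A := by
  calc (1:ℝ≥0∞) = hitTail M z A 0 := (hitTail_zero_of_ne M h).symm
  _ ≤ hitMean M z A := ENNReal.le_tsum 0

lemma hitMean_rec (M : S → S → ℝ≥0∞) {z A : S} (h : A ≠ z) :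
    hitMean M z A = 1 + ∑ B, M A B * hitMean M z B := by
  rw [hitMean, tsum_eq_zero_add' ENNReal.summable, hitTail_zero_of_ne M h]
  congr 1
  calc ∑' t : ℕ, hitTail M z A (t + 1)
      = ∑' t : ℕ, ∑ B, M A B * hitTail M z B t := by
        simp only [hitTail_succ_of_ne M h]
    _ = ∑ B, ∑' t : ℕ, M A B * hitTail M z B t :=
        Summable.tsum_finsetSum fun _ _ => ENNReal.summable
    _ = ∑ B, M A B * hitMean M z B := by
        simp only [ENNReal.tsum_mul_left]; rfl

/-- The key algebraic step. -/
lemma final_alg (w x : S → ℝ≥0∞) (c κ : ℝ≥0∞)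
    (hw : ∑ B, w B = 1) (hκfin : κ ≠ ∞) (hcfin : c ≠ ∞)
    (hx1 : ∀ B, w B ≠ 0 → x B ≤ c) (hx2 : ∀ B, w B ≠ 0 → c ≤ x B + κ)
    (hc : c = 1 + ∑ B, w B * x B) :
    1 + ∑ B, w B * (κ * x B + (x B) ^ 2 + 2 * x B) ≤ κ * c + c ^ 2 := by
  set m := ∑ B, w B * x B with hm
  have hmfin : m ≠ ∞ := fun h => hcfin (by rw [hc, h, add_top])
  have hD : κ * m + c ^ 2 ≠ ∞ :=
    ENNReal.add_ne_top.mpr ⟨ENNReal.mul_ne_top hκfin hmfin, ENNReal.pow_ne_top hcfin⟩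
  have hpt : ∀ B, w B * (κ * x B + (x B) ^ 2 + 2 * x B + (κ * x B + c ^ 2))
      ≤ w B * (2 * x B + 2 * c * x B + κ * c + κ * x B) := by
    intro B
    by_cases h0 : w B = 0
    · simp [h0]
    refine mul_le_mul_right ?_ _
    have h1 := hx1 B h0
    have h2 := hx2 B h0
    set d := c - x B with hd
    have hxd : c = x B + d := (add_tsub_cancel_of_le h1).symm
    have hdκ : d ≤ κ := tsub_le_iff_right.mpr (by rwa [add_comm] at h2)
    calc κ * x B + (x B) ^ 2 + 2 * x B + (κ * x B + c ^ 2)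
        = (2 * (κ * x B) + 2 * x B + 2 * (x B) ^ 2 + 2 * (x B * d)) + d * d := by
          rw [hxd]; ring
      _ ≤ (2 * (κ * x B) + 2 * x B + 2 * (x B) ^ 2 + 2 * (x B * d)) + κ * d :=
          add_le_add_right (mul_le_mul_left hdκ d) _
      _ = 2 * x B + 2 * c * x B + κ * c + κ * x B := by rw [hxd]; ring
  have h1 : κ * m = ∑ B, w B * (κ * x B) := by
    rw [hm, Finset.mul_sum]; exact Finset.sum_congr rfl fun B _ => by ring
  have h2 : c ^ 2 = ∑ B, w B * c ^ 2 := by rw [← Finset.sum_mul, hw, one_mul]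
  have eA : ∑ B, w B * (2 * x B) = 2 * m := by
    rw [hm, Finset.mul_sum]; exact Finset.sum_congr rfl fun B _ => by ring
  have eB : ∑ B, w B * (2 * c * x B) = 2 * c * m := by
    rw [hm, Finset.mul_sum]; exact Finset.sum_congr rfl fun B _ => by ring
  have eC : ∑ B, w B * (κ * c) = κ * c := by rw [← Finset.sum_mul, hw, one_mul]
  have eD : ∑ B, w B * (κ * x B) = κ * m := h1.symm
  have split1 : ∑ B, w B * (κ * x B + (x B) ^ 2 + 2 * x B + (κ * x B + c ^ 2))
      = (∑ B, w B * (κ * x B + (x B) ^ 2 + 2 * x B))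
        + ((∑ B, w B * (κ * x B)) + ∑ B, w B * c ^ 2) := by
    rw [← Finset.sum_add_distrib, ← Finset.sum_add_distrib]
    exact Finset.sum_congr rfl fun B _ => by ring
  have split2 : ∑ B, w B * (2 * x B + 2 * c * x B + κ * c + κ * x B)
      = (∑ B, w B * (2 * x B)) + (∑ B, w B * (2 * c * x B))
        + (∑ B, w B * (κ * c)) + ∑ B, w B * (κ * x B) := by
    rw [← Finset.sum_add_distrib, ← Finset.sum_add_distrib, ← Finset.sum_add_distrib]
    exact Finset.sum_congr rfl fun B _ => by ring
  rw [← ENNReal.add_le_add_iff_right hD]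
  calc (1 + ∑ B, w B * (κ * x B + (x B) ^ 2 + 2 * x B)) + (κ * m + c ^ 2)
      = 1 + ∑ B, w B * (κ * x B + (x B) ^ 2 + 2 * x B + (κ * x B + c ^ 2)) := by
        rw [split1, ← h1, ← h2]; ring
    _ ≤ 1 + ∑ B, w B * (2 * x B + 2 * c * x B + κ * c + κ * x B) :=
        add_le_add_right (Finset.sum_le_sum fun B _ => hpt B) 1
    _ = 1 + (2 * m + 2 * c * m + κ * c + κ * m) := by
        rw [split2, eA, eB, eC, eD]
    _ ≤ (κ * c + c ^ 2) + (κ * m + c ^ 2) := by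
        rw [hc]
        have : (κ * (1 + m) + (1 + m) ^ 2) + (κ * m + (1 + m) ^ 2)
            = (1 + (2 * m + 2 * (1 + m) * m + κ * (1 + m) + κ * m)) + 1 := by ring
        rw [this]
        exact le_self_add

lemma aldous_key (M : S → S → ℝ≥0∞) (hM : ∀ A, ∑ B, M A B = 1) (z : S) (κ : ℝ≥0∞)
    (hκ : ∀ A B : S, 0 < M A B →
      hitMean M z B ≤ hitMean M z A ∧ hitMean M z A - hitMean M z B ≤ κ) :
    ∀ (n : ℕ) (A : S), ∑ t ∈ Finset.range n, (2 * (t : ℝ≥0∞) + 1) * hitTail M z A t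
      ≤ κ * hitMean M z A + (hitMean M z A) ^ 2 := by
  intro n
  induction n with
  | zero => intro A; simp
  | succ n ih =>
    intro A
    by_cases hA : A = z
    · subst hA; simp [hitTail_self]
    by_cases hcinf : hitMean M z A = ∞
    · have : κ * hitMean M z A + (hitMean M z A) ^ 2 = ⊤ := by
        rw [hcinf, pow_two, ENNReal.top_mul_top, add_top]
      rw [this]; exact le_top
    by_cases hkinf : κ = ∞
    · have h1 : hitMean M z A ≠ 0 := by
        intro h0
        have := one_le_hitMean M hA
        rw [h0] at this
        simp at this
      rw [hkinf, ENNReal.top_mul h1]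
      simp
    -- main case
    have hBsum : ∀ B : S, ∑ i ∈ Finset.range n, (2 * (i : ℝ≥0∞) + 3) * hitTail M z B i
        ≤ κ * hitMean M z B + (hitMean M z B) ^ 2 + 2 * hitMean M z B := by
      intro B
      calc ∑ i ∈ Finset.range n, (2 * (i : ℝ≥0∞) + 3) * hitTail M z B i
          = ∑ i ∈ Finset.range n,
              ((2 * (i : ℝ≥0∞) + 1) * hitTail M z B i + 2 * hitTail M z B i) :=
            Finset.sum_congr rfl fun i _ => by ring
        _ = (∑ i ∈ Finset.range n, (2 * (i : ℝ≥0∞) + 1) * hitTail M z B i)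
            + 2 * ∑ i ∈ Finset.range n, hitTail M z B i := by
            rw [Finset.sum_add_distrib, Finset.mul_sum]
        _ ≤ (κ * hitMean M z B + (hitMean M z B) ^ 2) + 2 * hitMean M z B := by
            gcongr
            · exact ih B
            · exact ENNReal.sum_le_tsum _
    have e0 : (2 * ((0 : ℕ) : ℝ≥0∞) + 1) * hitTail M z A 0 = 1 := by
      rw [hitTail_zero_of_ne M hA]; norm_num
    have e1 : ∀ i : ℕ, (2 * (((i + 1 : ℕ)) : ℝ≥0∞) + 1) * hitTail M z A (i + 1)
        = ∑ B, M A B * ((2 * (i : ℝ≥0∞) + 3) * hitTail M z B i) := by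
      intro i
      rw [hitTail_succ_of_ne M hA, Finset.mul_sum]
      refine Finset.sum_congr rfl fun B _ => ?_
      push_cast
      ring
    calc ∑ t ∈ Finset.range (n + 1), (2 * (t : ℝ≥0∞) + 1) * hitTail M z A t
        = (∑ i ∈ Finset.range n, (2 * (((i + 1 : ℕ)) : ℝ≥0∞) + 1) * hitTail M z A (i + 1))
          + (2 * ((0 : ℕ) : ℝ≥0∞) + 1) * hitTail M z A 0 :=
          Finset.sum_range_succ' _ n
      _ = 1 + ∑ B, M A B * ∑ i ∈ Finset.range n, (2 * (i : ℝ≥0∞) + 3) * hitTail M z B i := by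
          rw [e0, add_comm]
          congr 1
          rw [Finset.sum_congr rfl fun i _ => e1 i, Finset.sum_comm]
          exact Finset.sum_congr rfl fun B _ => (Finset.mul_sum _ _ _).symm
      _ ≤ 1 + ∑ B, M A B * (κ * hitMean M z B + (hitMean M z B) ^ 2 + 2 * hitMean M z B) := by
          gcongr with B
          exact hBsum B
      _ ≤ κ * hitMean M z A + (hitMean M z A) ^ 2 := by
          refine final_alg (M A) (hitMean M z) _ κ (hM A) hkinf hcinf ?_ ?_ (hitMean_rec M hA)
          · intro B h0
            exact (hκ A B (zero_lt_iff.mpr h0)).1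
          · intro B h0
            have := (hκ A B (zero_lt_iff.mpr h0)).2
            rw [add_comm]
            exact tsub_le_iff_right.mp this

end Aux

/-- **Lemma (Aldous' variance estimate for hitting times).**  Let `T` be the hitting
time of a fixed state `z` by a Markov chain on a finite state space with kernel `M`,
almost surely finite from every initial state, and let `h(A) := E_A[T]`.  If
`0 ≤ h(A) − h(B) ≤ κ` for every allowed transition `A → B`, then
`Var_A(T) ≤ κ E_A[T]` for every initial state `A`. -/
theorem aldous_variance_estimate
    {S : Type} [Fintype S] [DecidableEq S]
    (M : S → S → ℝ≥0∞) (hM : ∀ A, ∑ B, M A B = 1)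
    (z : S)
    (hfin : ∀ A : S, Filter.Tendsto (fun t => hitTail M z A t) Filter.atTop (nhds 0))
    (κ : ℝ≥0∞)
    (hκ : ∀ A B : S, 0 < M A B →
      hitMean M z B ≤ hitMean M z A ∧ hitMean M z A - hitMean M z B ≤ κ) :
    ∀ A : S, hitVar M z A ≤ κ * hitMean M z A := by
  intro A
  rw [hitVar, tsub_le_iff_right, ENNReal.tsum_eq_iSup_nat]
  exact iSup_le fun n => aldous_key M hM z κ hκ n A

end ARW
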